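/- Let N ≥ 2 and consider the free abelian group ℤ^N with standard basis e₁,…,e_N. Let m and r be positive integers with gcd(m,r) = 1. Let ℓ = m·e₁, and let h = a₁e₁ + a₂e₂ + … + a_N e_N be a primitive vector (i.e. gcd(a₁,…,a_N) = 1) such that aᵢ ≠ 0 for at least one index i ≥ 2. Set γ := gcd(a₂,…,a_N) and assume gcd(m,γ) = 1. Then the set of natural numbers y such that ℓ + (r·y)·h is primitive in ℤ^N is infinite. -/

import Mathlib

/-- Conclusion of Lemma `cambiopol` in lattice-theoretic form: in `ℤ^N` (N ≥ 2), with
`ℓ = m·e₁`, `h = (a₁,…,a_N)` primitive with some `aᵢ ≠ 0` for `i ≥ 2`,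
`γ = gcd(a₂,…,a_N)`, `gcd(m,r) = 1` and `gcd(m,γ) = 1`, the set of natural numbers `y`
such that `ℓ + (r·y)·h` is primitive is infinite. Vectors are `Fin N → ℤ` (0-indexed,
so `e₁` is index `0` and "indices `i ≥ 2`" are those with `0 < i.val`); primitivity
means the gcd of all coordinates is `1`. -/
theorem infinite_primitive_translates
    (N : ℕ) (hN : 2 ≤ N) (m r : ℤ) (hm : 0 < m) (hr : 0 < r)
    (hmr : Int.gcd m r = 1)
    (a : Fin N → ℤ)
    (hprim : Finset.univ.gcd a = 1)
    (hex : ∃ i : Fin N, 0 < i.val ∧ a i ≠ 0)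
    (γ : ℤ)
    (hγ : γ = (Finset.univ.filter fun i : Fin N => 0 < i.val).gcd a)
    (hmγ : Int.gcd m γ = 1) :
    {y : ℕ |
      Finset.univ.gcd
        (fun i : Fin N => (if i.val = 0 then m else 0) + r * (y : ℤ) * a i) = 1}.Infinite := by
  obtain ⟨i₀, hi₀, ha₀⟩ := hex
  have hγ0 : γ ≠ 0 := by
    intro h0
    rw [h0] at hγ
    have := (Finset.gcd_eq_zero_iff).mp hγ.symm i₀ (by simp [hi₀])
    exact ha₀ this
  -- key membership lemma
  have key : ∀ y : ℕ, γ ∣ (y : ℤ) → IsCoprime m (y : ℤ) →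
      Finset.univ.gcd
        (fun i : Fin N => (if i.val = 0 then m else 0) + r * (y : ℤ) * a i) = 1 := by
    intro y hdvd hcop
    set F : Fin N → ℤ := fun i => (if i.val = 0 then m else 0) + r * (y : ℤ) * a i with hF
    set g : ℤ := Finset.univ.gcd F with hg
    have hdvdF : ∀ i : Fin N, g ∣ F i := fun i => Finset.gcd_dvd (Finset.mem_univ i)
    have hnatabs : g.natAbs = 1 := by
      rw [Nat.eq_one_iff_not_exists_prime_dvd]
      intro p hp hpdvd
      have hpz : Prime (p : ℤ) := Nat.prime_iff_prime_int.mp hp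
      have hpg : (p : ℤ) ∣ g := (Int.natAbs_dvd_natAbs.mp (by simpa using hpdvd))
      have hp0 : (p : ℤ) ∣ m + r * (y : ℤ) * a ⟨0, by omega⟩ := by
        have := hpg.trans (hdvdF ⟨0, by omega⟩)
        simpa [F] using this
      by_cases hry : (p : ℤ) ∣ r * (y : ℤ)
      · have hpm : (p : ℤ) ∣ m := by
          have : (p : ℤ) ∣ r * (y : ℤ) * a ⟨0, by omega⟩ := hry.mul_right _
          have := dvd_sub hp0 this
          simpa using this
        rcases hpz.dvd_mul.mp hry with hpr | hpy
        · have : (p : ℤ) ∣ (Int.gcd m r : ℤ) := Int.dvd_coe_gcd hpm hpr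
          rw [hmr] at this
          exact hpz.not_dvd_one (by simpa using this)
        · have : (p : ℤ) ∣ 1 := by
            rcases hcop with ⟨u, v, huv⟩
            have : (p : ℤ) ∣ u * m + v * (y : ℤ) :=
              dvd_add (hpm.mul_left u) (hpy.mul_left v)
            rwa [huv] at this
          exact hpz.not_dvd_one this
      · have hpa : ∀ i : Fin N, 0 < i.val → (p : ℤ) ∣ a i := by
          intro i hi
          have : (p : ℤ) ∣ r * (y : ℤ) * a i := by
            have := hpg.trans (hdvdF i)
            simpa [F, Nat.pos_iff_ne_zero.mp hi] using this
          rcases hpz.dvd_mul.mp this with h | h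
          · exact absurd h hry
          · exact h
        have hpγ : (p : ℤ) ∣ γ := by
          rw [hγ]
          exact Finset.dvd_gcd fun i hi => hpa i (by simpa using (Finset.mem_filter.mp hi).2)
        exact hry ((hpγ.trans hdvd).mul_left r)
    have hnorm : normalize g = g := Finset.normalize_gcd
    have : |g| = g := by rw [Int.abs_eq_normalize, hnorm]
    have hgpos : 0 ≤ g := by
      by_contra h
      push_neg at h
      rw [abs_of_neg h] at this
      omega
    omega
  -- the infinite family
  set f : ℕ → ℕ := fun t => γ.natAbs * (1 + m.natAbs * t) with hf
  have hγa : 0 < γ.natAbs := Int.natAbs_pos.mpr hγ0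
  have hma : 0 < m.natAbs := Int.natAbs_pos.mpr hm.ne'
  have hinj : Function.Injective f := by
    intro s t hst
    simp only [f] at hst
    have := Nat.eq_of_mul_eq_mul_left hγa hst
    have := Nat.add_left_cancel this
    exact Nat.eq_of_mul_eq_mul_left hma this
  apply Set.infinite_of_injective_forall_mem hinj
  intro t
  show Finset.univ.gcd _ = 1
  apply key
  · have : (γ.natAbs : ℤ) ∣ (f t : ℤ) :=
      Int.natCast_dvd_natCast.mpr (Dvd.intro _ rfl)
    exact (Int.natAbs_dvd.mp this)
  · have hmnat : ((m.natAbs : ℤ)) = m := Int.natAbs_of_nonneg hm.le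
    have h1 : IsCoprime m ((1 : ℤ) + m * t) :=
      (isCoprime_one_right (x := m)).add_mul_left_right t
    have h2 : IsCoprime m ((γ.natAbs : ℤ)) := by
      rw [Int.isCoprime_iff_gcd_eq_one]
      simpa [Int.gcd, Int.natAbs_abs] using hmγ
    have h3 := h2.mul_right h1
    have hcast : ((γ.natAbs * (1 + m.natAbs * t) : ℕ) : ℤ)
        = (γ.natAbs : ℤ) * (1 + m * t) := by
      rw [Nat.cast_mul, Nat.cast_add, Nat.cast_one, Nat.cast_mul, hmnat]
    show IsCoprime m ((f t : ℕ) : ℤ)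
    rw [hf]
    simpa [hcast] using h3
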